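/- For every 1-isolator φ for S5[Con,Ground], there exist a model (W,V) whose variable assignment satisfies the Con and Ground constraints and a world w ∈ W such that W,w ⊩_V φ. -/

import Mathlib

namespace KripkeModal

/-- Formulas of the modal language `L_□`: atoms `T(x)`, `F(x)` for variables
`x : ℕ`, negation, conjunction, and box. -/
inductive Fml : Type
  | tt : ℕ → Fml   -- T(x)
  | ff : ℕ → Fml   -- F(x)
  | neg : Fml → Fml
  | and : Fml → Fml → Fml
  | box : Fml → Fml
deriving DecidableEq

namespace Fml

/-- Material implication, defined from `¬, ∧`. -/
def imp (φ ψ : Fml) : Fml := neg (and φ (neg ψ))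

/-- Disjunction, defined from `¬, ∧`. -/
def or (φ ψ : Fml) : Fml := neg (and (neg φ) (neg ψ))

/-- Biconditional. -/
def iff (φ ψ : Fml) : Fml := and (imp φ ψ) (imp ψ φ)

/-- Diamond: `◇φ := ¬□¬φ`. -/
def dia (φ : Fml) : Fml := neg (box (neg φ))

/-- `N(x) := ¬T(x) ∧ ¬F(x)`. -/
def Nf (x : ℕ) : Fml := and (neg (tt x)) (neg (ff x))

/-- A fixed contradiction. -/
def bot : Fml := and (tt 0) (neg (tt 0))

end Fml

open Fml

/-- Evaluate a formula propositionally under a valuation `v` of the "atoms":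
the atomic formulas `T(x)`, `F(x)` and all boxed formulas are treated as
propositional atoms. -/
def evalProp (v : Fml → Bool) : Fml → Bool
  | Fml.neg φ => !(evalProp v φ)
  | Fml.and φ ψ => evalProp v φ && evalProp v ψ
  | φ => v φ

/-- A formula is a substitution instance of a classical propositional tautology
iff it evaluates to true under every propositional valuation of its atoms. -/
def Tautology (φ : Fml) : Prop := ∀ v : Fml → Bool, evalProp v φ = true

/-- Provability in the modal system `S5[Ax]`: the smallest set of formulas
containing all substitution instances of propositional tautologies, all
instances of K, T and 5, all formulas in `Ax`, closed under modus ponens and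
necessitation.  Taking `Ax = ∅` gives `S5` itself. -/
inductive Prv (Ax : Set Fml) : Fml → Prop
  | taut {φ} : Tautology φ → Prv Ax φ
  | axK (A B : Fml) : Prv Ax (imp (box (imp A B)) (imp (box A) (box B)))
  | axT (A : Fml) : Prv Ax (imp (box A) A)
  | ax5 (A : Fml) : Prv Ax (imp (dia A) (box (dia A)))
  | axm {φ} : φ ∈ Ax → Prv Ax φ
  | mp {A B} : Prv Ax (imp A B) → Prv Ax A → Prv Ax B
  | nec {A} : Prv Ax A → Prv Ax (box A)

/-- A system is consistent if it does not prove a contradiction. -/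
def Consistent (Ax : Set Fml) : Prop := ¬ Prv Ax Fml.bot

/-- The axiom schema `Con`: `¬(T(x) ∧ F(x))`. -/
def ConAx : Set Fml := { φ | ∃ x : ℕ, φ = neg (and (tt x) (ff x)) }

/-- The axiom schema `Ground`: `(◇T(x) ∧ ◇F(x)) → ◇N(x)`. -/
def GroundAx : Set Fml :=
  { φ | ∃ x : ℕ, φ = imp (and (dia (tt x)) (dia (ff x))) (dia (Nf x)) }

/-- Conjunction of a list of formulas (empty conjunction is `¬⊥`). -/
def bigAnd : List Fml → Fml
  | [] => Fml.neg Fml.bot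
  | [φ] => φ
  | φ :: ψ :: rest => Fml.and φ (bigAnd (ψ :: rest))

/-- Disjunction of a list of formulas (the empty disjunction is the fixed
contradiction `⊥`). -/
def bigOr : List Fml → Fml
  | [] => Fml.bot
  | [φ] => φ
  | φ :: ψ :: rest => Fml.or φ (bigOr (ψ :: rest))

/-- The axiom schema `Min_n`: all instances
`(◇N(x_1) ∧ … ∧ ◇N(x_n)) → ◇(N(x_1) ∧ … ∧ N(x_n))` obtained by substituting
arbitrary (not necessarily distinct) variables for `x_1, …, x_n`. -/
def MinAx (n : ℕ) : Set Fml :=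
  { φ | ∃ l : List ℕ, l.length = n ∧
      φ = imp (bigAnd (l.map (fun x => dia (Nf x)))) (dia (bigAnd (l.map Nf))) }

/-- A formula is extensional if it contains no `□`. -/
def Extensional : Fml → Prop
  | tt _ => True
  | ff _ => True
  | Fml.neg φ => Extensional φ
  | Fml.and φ ψ => Extensional φ ∧ Extensional ψ
  | box _ => False

/-- A formula is intensional if every atomic subformula occurs within the
scope of a `□`. -/
def Intensional : Fml → Prop
  | tt _ => False
  | ff _ => False
  | Fml.neg φ => Intensional φ
  | Fml.and φ ψ => Intensional φ ∧ Intensional ψ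
  | box _ => True

/-- The set of variables occurring in a formula. -/
def vars : Fml → Set ℕ
  | tt x => {x}
  | ff x => {x}
  | Fml.neg φ => vars φ
  | Fml.and φ ψ => vars φ ∪ vars ψ
  | box φ => vars φ

/-- An `n`-formula: one whose atoms use only the variables `x_1, …, x_n`. -/
def IsNFormula (n : ℕ) (φ : Fml) : Prop := vars φ ⊆ {x | 1 ≤ x ∧ x ≤ n}

/-- A 1-formula: one whose atoms use only the single variable `x_1`. -/
abbrev Is1Formula (φ : Fml) : Prop := IsNFormula 1 φ

/-- `φ` is `Γ`-maximal for the system `S5[Ax]`. -/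
def GammaMaximal (Ax : Set Fml) (Γ : Set Fml) (φ : Fml) : Prop :=
  Consistent (Ax ∪ {φ}) ∧ φ ∈ Γ ∧
    ∀ ψ ∈ Γ, Prv Ax (imp φ ψ) ∨ Prv Ax (imp φ (neg ψ))

/-- Extensional `n`-isolators for `S5[Ax]`. -/
def ExtIsolator (n : ℕ) (Ax : Set Fml) (φ : Fml) : Prop :=
  GammaMaximal Ax {ψ | Extensional ψ ∧ IsNFormula n ψ} φ

/-- Intensional `n`-isolators for `S5[Ax]`. -/
def IntIsolator (n : ℕ) (Ax : Set Fml) (φ : Fml) : Prop :=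
  GammaMaximal Ax {ψ | Intensional ψ ∧ IsNFormula n ψ} φ

/-- An `n`-isolator for `S5[Ax]`: a consistent conjunction `ε ∧ ι` of an
extensional `n`-isolator and an intensional `n`-isolator. -/
def Isolator (n : ℕ) (Ax : Set Fml) (φ : Fml) : Prop :=
  ∃ ε ι, ExtIsolator n Ax ε ∧ IntIsolator n Ax ι ∧
    φ = Fml.and ε ι ∧ Consistent (Ax ∪ {φ})

/-- Satisfaction in a model `(W, V)` (with `V = (V1, V2)`) at a world `w`. -/
def Sat {W : Type*} (V1 V2 : ℕ → Set W) : W → Fml → Prop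
  | w, tt x => w ∈ V1 x
  | w, ff x => w ∈ V2 x
  | w, Fml.neg φ => ¬ Sat V1 V2 w φ
  | w, Fml.and φ ψ => Sat V1 V2 w φ ∧ Sat V1 V2 w ψ
  | _, box φ => ∀ v, Sat V1 V2 v φ

/-- The variable assignment satisfies the `Con` constraint. -/
def ConC {W : Type*} (V1 V2 : ℕ → Set W) : Prop := ∀ x, V1 x ∩ V2 x = ∅

/-- The variable assignment satisfies the `Ground` constraint. -/
def GroundC {W : Type*} (V1 V2 : ℕ → Set W) : Prop :=
  ∀ x, (V1 x).Nonempty → (V2 x).Nonempty → ((V1 x ∪ V2 x)ᶜ : Set W).Nonempty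

/-- The variable assignment satisfies the `Min` constraint. -/
def MinC {W : Type*} (V1 V2 : ℕ → Set W) : Prop :=
  ∀ l : List ℕ, l ≠ [] → (∀ x ∈ l, ((V1 x ∪ V2 x)ᶜ : Set W).Nonempty) →
    (⋂ x ∈ l, ((V1 x ∪ V2 x)ᶜ : Set W)).Nonempty

/-- The prime conditions for a subset `S` of the tensor `[3]^n`, realized as
`Fin n → Fin 3` where the value `0` stands for the layer `T`, `1` for `F`,
and `2` for `N` (i.e. `1, 2, 3` in the paper's numbering). -/
def PrimeConditions (n : ℕ) (S : Set (Fin n → Fin 3)) : Prop :=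
  S.Nonempty ∧
  (∀ j : Fin n, (S ∩ {a | a j = 0}).Nonempty → (S ∩ {a | a j = 1}).Nonempty →
      (S ∩ {a | a j = 2}).Nonempty) ∧
  ∀ J : Set (Fin n), J.Nonempty →
    (∀ j ∈ J, (S ∩ {a | a j = 2}).Nonempty) →
    (S ∩ ⋂ j ∈ J, {a | a j = 2}).Nonempty

/-- `χ_1 = T`, `χ_2 = F`, `χ_3 = N` (with `Fin 3` values `0, 1, 2`). -/
def chi (k : Fin 3) (x : ℕ) : Fml :=
  if k = 0 then tt x else if k = 1 then ff x else Nf x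

/-- The extensional `n`-isolator `φ_a = χ_{a_1}(x_1) ∧ … ∧ χ_{a_n}(x_n)`
associated with a tuple `a ∈ [3]^n`. -/
def tupleFml {n : ℕ} (a : Fin n → Fin 3) : Fml :=
  bigAnd ((List.finRange n).map (fun i => chi (a i) (i.1 + 1)))

open Classical in
/-- The pre-`n`-isolator of `S ⊆ [3]^n`:
`⋀_{a ∈ S} ◇φ_a ∧ ⋀_{a ∉ S} ¬◇φ_a`. -/
noncomputable def preIsolator (n : ℕ) (S : Set (Fin n → Fin 3)) : Fml :=
  bigAnd (((Finset.univ : Finset (Fin n → Fin 3)).toList).map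
    (fun a => if a ∈ S then dia (tupleFml a) else Fml.neg (dia (tupleFml a))))


section Aux
open Fml

/-! ### Propositional evaluation lemmas -/

@[simp] lemma ev_neg (v : Fml → Bool) (φ : Fml) : evalProp v (Fml.neg φ) = !evalProp v φ := rfl
@[simp] lemma ev_and (v : Fml → Bool) (φ ψ : Fml) : evalProp v (Fml.and φ ψ) = (evalProp v φ && evalProp v ψ) := rfl
@[simp] lemma ev_tt (v : Fml → Bool) (x : ℕ) : evalProp v (tt x) = v (tt x) := rfl
@[simp] lemma ev_ff (v : Fml → Bool) (x : ℕ) : evalProp v (ff x) = v (ff x) := rfl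
@[simp] lemma ev_box (v : Fml → Bool) (φ : Fml) : evalProp v (box φ) = v (box φ) := rfl

/-! ### Basic proof-theoretic helpers -/

variable {Ax : Set Fml}

lemma P1 {A B : Fml} (t : Tautology (imp A B)) (a : Prv Ax A) : Prv Ax B :=
  Prv.mp (Prv.taut t) a
lemma P2 {A B C : Fml} (t : Tautology (imp A (imp B C))) (a : Prv Ax A) (b : Prv Ax B) :
    Prv Ax C := Prv.mp (P1 t a) b
lemma P3 {A B C D : Fml} (t : Tautology (imp A (imp B (imp C D)))) (a : Prv Ax A)
    (b : Prv Ax B) (c : Prv Ax C) : Prv Ax D := Prv.mp (P2 t a b) c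

lemma t_comp (X Y Z : Fml) : Tautology (imp (imp X Y) (imp (imp Y Z) (imp X Z))) := by
  intro v; simp only [imp, ev_neg, ev_and]
  generalize evalProp v X = x; generalize evalProp v Y = y; generalize evalProp v Z = z
  revert x y z; decide

lemma comp {X Y Z : Fml} (h1 : Prv Ax (imp X Y)) (h2 : Prv Ax (imp Y Z)) :
    Prv Ax (imp X Z) := P2 (t_comp X Y Z) h1 h2

lemma t_contra (A B : Fml) : Tautology (imp (imp A B) (imp (neg B) (neg A))) := by
  intro v; simp only [imp, ev_neg, ev_and]
  generalize evalProp v A = a; generalize evalProp v B = b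
  revert a b; decide

lemma contrap {A B : Fml} (h : Prv Ax (imp A B)) : Prv Ax (imp (neg B) (neg A)) :=
  P1 (t_contra A B) h

lemma t_proj1 (A B : Fml) : Tautology (imp (Fml.and A B) A) := by
  intro v; simp only [imp, ev_neg, ev_and]
  generalize evalProp v A = a; generalize evalProp v B = b
  revert a b; decide

lemma t_proj2 (A B : Fml) : Tautology (imp (Fml.and A B) B) := by
  intro v; simp only [imp, ev_neg, ev_and]
  generalize evalProp v A = a; generalize evalProp v B = b
  revert a b; decide

lemma t_andintro (X A B : Fml) :
    Tautology (imp (imp X A) (imp (imp X B) (imp X (Fml.and A B)))) := by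
  intro v; simp only [imp, ev_neg, ev_and]
  generalize evalProp v X = x; generalize evalProp v A = a; generalize evalProp v B = b
  revert x a b; decide

lemma andintro {X A B : Fml} (h1 : Prv Ax (imp X A)) (h2 : Prv Ax (imp X B)) :
    Prv Ax (imp X (Fml.and A B)) := P2 (t_andintro X A B) h1 h2

lemma t_imp_bot (X A : Fml) :
    Tautology (imp (imp X A) (imp (imp X (neg A)) (imp X Fml.bot))) := by
  intro v; simp only [imp, Fml.bot, ev_neg, ev_and, ev_tt]
  generalize evalProp v X = x; generalize evalProp v A = a; generalize v (tt 0) = t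
  revert x a t; decide

lemma imp_bot {X A : Fml} (h1 : Prv Ax (imp X A)) (h2 : Prv Ax (imp X (neg A))) :
    Prv Ax (imp X Fml.bot) := P2 (t_imp_bot X A) h1 h2

lemma t_dni (A : Fml) : Tautology (imp A (neg (neg A))) := by
  intro v; simp only [imp, ev_neg, ev_and]
  generalize evalProp v A = a; revert a; decide

lemma t_dne (A : Fml) : Tautology (imp (neg (neg A)) A) := by
  intro v; simp only [imp, ev_neg, ev_and]
  generalize evalProp v A = a; revert a; decide

lemma t_exfalso (C G : Fml) : Tautology (imp (neg C) (imp C G)) := by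
  intro v; simp only [imp, ev_neg, ev_and]
  generalize evalProp v C = c; generalize evalProp v G = g
  revert c g; decide

lemma t_curry (A B C : Fml) :
    Tautology (imp (imp (Fml.and A B) C) (imp A (imp B C))) := by
  intro v; simp only [imp, ev_neg, ev_and]
  generalize evalProp v A = a; generalize evalProp v B = b; generalize evalProp v C = c
  revert a b c; decide

lemma curry {A B C : Fml} (h : Prv Ax (imp (Fml.and A B) C)) : Prv Ax (imp A (imp B C)) :=
  P1 (t_curry A B C) h

lemma t_weaken (X Z Y : Fml) : Tautology (imp (imp X Y) (imp (Fml.and X Z) Y)) := by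
  intro v; simp only [imp, ev_neg, ev_and]
  generalize evalProp v X = x; generalize evalProp v Y = y; generalize evalProp v Z = z
  revert x y z; decide

lemma weaken {X Z Y : Fml} (h : Prv Ax (imp X Y)) : Prv Ax (imp (Fml.and X Z) Y) :=
  P1 (t_weaken X Z Y) h

lemma t_mp_in (X A B : Fml) :
    Tautology (imp (imp X (imp A B)) (imp (imp X A) (imp X B))) := by
  intro v; simp only [imp, ev_neg, ev_and]
  generalize evalProp v X = x; generalize evalProp v A = a; generalize evalProp v B = b
  revert x a b; decide

lemma mp_in {X A B : Fml} (h1 : Prv Ax (imp X (imp A B))) (h2 : Prv Ax (imp X A)) :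
    Prv Ax (imp X B) := P2 (t_mp_in X A B) h1 h2

end Aux
section Aux2
open Fml

variable {Ax : Set Fml}

lemma prv_mono {Ax Ax' : Set Fml} (hs : Ax ⊆ Ax') {θ : Fml} (h : Prv Ax θ) : Prv Ax' θ := by
  induction h with
  | taut t => exact Prv.taut t
  | axK A B => exact Prv.axK A B
  | axT A => exact Prv.axT A
  | ax5 A => exact Prv.ax5 A
  | axm hm => exact Prv.axm (hs hm)
  | mp _ _ ih1 ih2 => exact Prv.mp ih1 ih2
  | nec _ ih => exact Prv.nec ih

lemma not_consistent_of_imp_bot {χ : Fml} (h : Prv Ax (imp χ Fml.bot)) :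
    ¬ Consistent (Ax ∪ {χ}) := by
  intro hc
  exact hc (Prv.mp (prv_mono Set.subset_union_left h)
    (Prv.axm (Set.mem_union_right _ rfl)))

/-- Box monotonicity: from `⊢ A → B` infer `⊢ □A → □B`. -/
lemma kmono {A B : Fml} (h : Prv Ax (imp A B)) : Prv Ax (imp (box A) (box B)) :=
  Prv.mp (Prv.axK A B) (Prv.nec h)

/-- `⊢ □A → ¬◇¬A`-style: `□(¬A) → ¬◇A`. -/
lemma box_neg_negdia (A : Fml) : Prv Ax (imp (box (neg A)) (neg (dia A))) :=
  Prv.taut (t_dni (box (neg A)))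

lemma negdia_boxneg (A : Fml) : Prv Ax (imp (neg (dia A)) (box (neg A))) :=
  Prv.taut (t_dne (box (neg A)))

/-- Diamond monotonicity: from `⊢ A → B` infer `⊢ ◇A → ◇B`. -/
lemma diamono {A B : Fml} (h : Prv Ax (imp A B)) : Prv Ax (imp (dia A) (dia B)) :=
  contrap (kmono (contrap h))

/-- K for diamond, object level: `⊢ □(A→B) → (◇A → ◇B)`. -/
lemma diaK (A B : Fml) : Prv Ax (imp (box (imp A B)) (imp (dia A) (dia B))) := by
  have h1 : Prv Ax (imp (box (imp A B)) (box (imp (neg B) (neg A)))) :=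
    kmono (Prv.taut (t_contra A B))
  have h2 : Prv Ax (imp (box (imp (neg B) (neg A))) (imp (box (neg B)) (box (neg A)))) :=
    Prv.axK _ _
  have h3 : Prv Ax (imp (imp (box (neg B)) (box (neg A)))
      (imp (neg (box (neg A))) (neg (box (neg B))))) :=
    Prv.taut (t_contra _ _)
  exact comp (comp h1 h2) h3

/-- `⊢ A → ◇A`. -/
lemma t_dia (A : Fml) : Prv Ax (imp A (dia A)) := by
  have h1 : Prv Ax (imp (box (neg A)) (neg A)) := Prv.axT (neg A)
  have h2 : Prv Ax (imp (neg (neg A)) (neg (box (neg A)))) := contrap h1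
  exact comp (Prv.taut (t_dni A)) h2

/-- Axiom B: `⊢ A → □◇A`. -/
lemma axB (A : Fml) : Prv Ax (imp A (box (dia A))) := comp (t_dia A) (Prv.ax5 A)

/-- `⊢ ◇□A → □A`. -/
lemma dia_box (A : Fml) : Prv Ax (imp (dia (box A)) (box A)) := by
  -- 5 on ¬A: ◇¬A → □◇¬A; contrapose: ¬□◇¬A → ¬◇¬A
  have h1 : Prv Ax (imp (neg (box (dia (neg A)))) (neg (dia (neg A)))) :=
    contrap (Prv.ax5 (neg A))
  -- ¬◇¬A = ¬¬□¬¬A → □¬¬A → □A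
  have h2 : Prv Ax (imp (neg (dia (neg A))) (box (neg (neg A)))) :=
    negdia_boxneg (neg A)
  have h3 : Prv Ax (imp (box (neg (neg A))) (box A)) := kmono (Prv.taut (t_dne A))
  have c1 : Prv Ax (imp (neg (box (dia (neg A)))) (box A)) := comp (comp h1 h2) h3
  -- ◇□A = ¬□¬□A → ¬□◇¬A : contrapose of □◇¬A → □¬□A
  have h4 : Prv Ax (imp (box A) (box (neg (neg A)))) := kmono (Prv.taut (t_dni A))
  have h5 : Prv Ax (imp (dia (neg A)) (neg (box A))) := contrap h4
  have h6 : Prv Ax (imp (box (dia (neg A))) (box (neg (box A)))) := kmono h5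
  have h7 : Prv Ax (imp (neg (box (neg (box A)))) (neg (box (dia (neg A))))) := contrap h6
  exact comp h7 c1

/-- Axiom 4: `⊢ □A → □□A`. -/
lemma ax4 (A : Fml) : Prv Ax (imp (box A) (box (box A))) :=
  comp (axB (box A)) (kmono (dia_box A))

/-- `⊢ ¬◇A → □¬◇A`. -/
lemma negdia_box (A : Fml) : Prv Ax (imp (neg (dia A)) (box (neg (dia A)))) := by
  have h1 : Prv Ax (imp (neg (dia A)) (box (neg A))) := negdia_boxneg A
  have h2 : Prv Ax (imp (box (neg A)) (box (box (neg A)))) := ax4 (neg A)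
  have h3 : Prv Ax (imp (box (box (neg A))) (box (neg (dia A)))) :=
    kmono (box_neg_negdia A)
  exact comp (comp h1 h2) h3

/-- `⊢ □A → (□B → □(A∧B))`. -/
lemma box_and2 (A B : Fml) : Prv Ax (imp (box A) (imp (box B) (box (Fml.and A B)))) := by
  have t : Tautology (imp A (imp B (Fml.and A B))) := by
    intro v; simp only [imp, ev_neg, ev_and]
    generalize evalProp v A = a; generalize evalProp v B = b
    revert a b; decide
  exact comp (kmono (Prv.taut t)) (Prv.axK B (Fml.and A B))

lemma imp_box_and {X A B : Fml} (h1 : Prv Ax (imp X (box A))) (h2 : Prv Ax (imp X (box B))) :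
    Prv Ax (imp X (box (Fml.and A B))) :=
  mp_in (comp h1 (box_and2 A B)) h2

end Aux2
section Aux3
open Fml

variable {Ax : Set Fml}

lemma chi_zero (x : ℕ) : chi 0 x = tt x := rfl
lemma chi_one (x : ℕ) : chi 1 x = ff x := rfl
lemma chi_two (x : ℕ) : chi 2 x = Nf x := rfl

/-- The literal `◇χ_k(x₁)` or `¬◇χ_k(x₁)` depending on `s k`. -/
def lit (s : Fin 3 → Bool) (k : Fin 3) : Fml :=
  if s k then dia (chi k 1) else Fml.neg (dia (chi k 1))

/-- `ψ_s = L₀ ∧ (L₁ ∧ L₂)`. -/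
def psi (s : Fin 3 → Bool) : Fml := Fml.and (lit s 0) (Fml.and (lit s 1) (lit s 2))

lemma psi_lit (s : Fin 3 → Bool) (k : Fin 3) : Prv Ax (imp (psi s) (lit s k)) := by
  fin_cases k
  · exact Prv.taut (t_proj1 _ _)
  · exact comp (Prv.taut (t_proj2 _ _)) (Prv.taut (t_proj1 _ _))
  · exact comp (Prv.taut (t_proj2 _ _)) (Prv.taut (t_proj2 _ _))

lemma lit_box (s : Fin 3 → Bool) (k : Fin 3) :
    Prv Ax (imp (lit s k) (box (lit s k))) := by
  by_cases h : s k = true <;> simp only [lit, h, if_true, if_false, Bool.not_eq_true] <;>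
    [exact Prv.ax5 _; exact negdia_box _]

lemma psi_box (s : Fin 3 → Bool) : Prv Ax (imp (psi s) (box (psi s))) := by
  have h0 : Prv Ax (imp (psi s) (box (lit s 0))) := comp (psi_lit s 0) (lit_box s 0)
  have h1 : Prv Ax (imp (psi s) (box (lit s 1))) := comp (psi_lit s 1) (lit_box s 1)
  have h2 : Prv Ax (imp (psi s) (box (lit s 2))) := comp (psi_lit s 2) (lit_box s 2)
  exact imp_box_and h0 (imp_box_and h1 h2)

/-- Cover tautology: the three layer formulas `T, F, N` are exhaustive. -/
lemma t_cover (P G : Fml) :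
    Tautology (imp (imp P (imp (chi 0 1) G)) (imp (imp P (imp (chi 1 1) G))
      (imp (imp P (imp (chi 2 1) G)) (imp P G)))) := by
  intro v; simp only [chi_zero, chi_one, chi_two, Nf, imp, ev_neg, ev_and, ev_tt, ev_ff]
  generalize evalProp v P = p; generalize evalProp v G = g
  generalize v (tt 1) = t; generalize v (ff 1) = f
  revert p g t f; decide

lemma cover {P G : Fml} (h0 : Prv Ax (imp P (imp (chi 0 1) G)))
    (h1 : Prv Ax (imp P (imp (chi 1 1) G))) (h2 : Prv Ax (imp P (imp (chi 2 1) G))) :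
    Prv Ax (imp P G) := P3 (t_cover P G) h0 h1 h2

/-- Semantic value of a 1-formula at layer `k` of the intended model with layer set `s`. -/
def val (s : Fin 3 → Bool) : Fml → Fin 3 → Bool
  | Fml.tt _, k => decide (k = 0)
  | Fml.ff _, k => decide (k = 1)
  | Fml.neg φ, k => !val s φ k
  | Fml.and φ ψ, k => (val s φ k && val s ψ k)
  | Fml.box φ, _ => decide (∀ j, s j = true → val s φ j = true)

lemma val_int {s : Fin 3 → Bool} : ∀ {φ : Fml}, Intensional φ → ∀ k k' : Fin 3,
    val s φ k = val s φ k'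
  | Fml.tt _, h => absurd h (by simp [Intensional])
  | Fml.ff _, h => absurd h (by simp [Intensional])
  | Fml.neg φ, h => fun k k' => by simp only [val]; rw [val_int (φ := φ) h k k']
  | Fml.and φ ψ, h => fun k k' => by
      simp only [val]; rw [val_int (φ := φ) h.1 k k', val_int (φ := ψ) h.2 k k']
  | Fml.box φ, _ => fun _ _ => rfl

lemma is1_neg {φ : Fml} (h : Is1Formula (Fml.neg φ)) : Is1Formula φ := h
lemma is1_box {φ : Fml} (h : Is1Formula (Fml.box φ)) : Is1Formula φ := h
lemma is1_and_left {φ ψ : Fml} (h : Is1Formula (Fml.and φ ψ)) : Is1Formula φ :=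
  fun _ hx => h (Or.inl hx)
lemma is1_and_right {φ ψ : Fml} (h : Is1Formula (Fml.and φ ψ)) : Is1Formula ψ :=
  fun _ hx => h (Or.inr hx)
lemma is1_var {x : ℕ} (h : Is1Formula (Fml.tt x)) : x = 1 := by
  have := h (show x ∈ vars (Fml.tt x) from rfl)
  simp only [Set.mem_setOf_eq] at this; omega
lemma is1_var' {x : ℕ} (h : Is1Formula (Fml.ff x)) : x = 1 := by
  have := h (show x ∈ vars (Fml.ff x) from rfl)
  simp only [Set.mem_setOf_eq] at this; omega

end Aux3
section Aux4
open Fml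

variable {Ax : Set Fml}

lemma t_conL (A B : Fml) : Tautology (imp (Fml.neg (Fml.and A B)) (imp B (Fml.neg A))) := by
  intro v; simp only [imp, ev_neg, ev_and]
  generalize evalProp v A = a; generalize evalProp v B = b
  revert a b; decide

lemma t_conR (A B : Fml) : Tautology (imp (Fml.neg (Fml.and A B)) (imp A (Fml.neg B))) := by
  intro v; simp only [imp, ev_neg, ev_and]
  generalize evalProp v A = a; generalize evalProp v B = b
  revert a b; decide

lemma t_negand1 (A B : Fml) : Tautology (imp (Fml.neg A) (Fml.neg (Fml.and A B))) := by
  intro v; simp only [imp, ev_neg, ev_and]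
  generalize evalProp v A = a; generalize evalProp v B = b
  revert a b; decide

lemma t_negand2 (A B : Fml) : Tautology (imp (Fml.neg B) (Fml.neg (Fml.and A B))) := by
  intro v; simp only [imp, ev_neg, ev_and]
  generalize evalProp v A = a; generalize evalProp v B = b
  revert a b; decide

/-- THE KEY LEMMA: relative to the layer set `s`, the pre-isolator `ψ_s` together
with the layer formula `χ_k` decides every 1-formula, according to `val`. -/
lemma key (hCon : ConAx ⊆ Ax) (s : Fin 3 → Bool) :
    ∀ φ : Fml, Is1Formula φ → ∀ k : Fin 3,
    (val s φ k = true → Prv Ax (imp (Fml.and (psi s) (chi k 1)) φ)) ∧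
    (val s φ k = false → Prv Ax (imp (Fml.and (psi s) (chi k 1)) (Fml.neg φ))) := by
  intro φ
  induction φ with
  | tt x =>
    intro h1 k
    obtain rfl := is1_var h1
    have hcon : Prv Ax (Fml.neg (Fml.and (tt 1) (ff 1))) := Prv.axm (hCon ⟨1, rfl⟩)
    constructor
    · intro hv
      fin_cases k
      · exact Prv.taut (t_proj2 _ _)
      · simp [val] at hv
      · simp [val] at hv
    · intro hv
      fin_cases k
      · simp [val] at hv
      · exact comp (Prv.taut (t_proj2 _ _)) (P1 (t_conL _ _) hcon)
      · exact comp (Prv.taut (t_proj2 _ _)) (Prv.taut (t_proj1 _ _))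
  | ff x =>
    intro h1 k
    obtain rfl := is1_var' h1
    have hcon : Prv Ax (Fml.neg (Fml.and (tt 1) (ff 1))) := Prv.axm (hCon ⟨1, rfl⟩)
    constructor
    · intro hv
      fin_cases k
      · simp [val] at hv
      · exact Prv.taut (t_proj2 _ _)
      · simp [val] at hv
    · intro hv
      fin_cases k
      · exact comp (Prv.taut (t_proj2 _ _)) (P1 (t_conR _ _) hcon)
      · simp [val] at hv
      · exact comp (Prv.taut (t_proj2 _ _)) (Prv.taut (t_proj2 _ _))
  | neg φ ih =>
    intro h1 k
    have ihk := ih (is1_neg h1) k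
    constructor
    · intro hv
      exact ihk.2 (by simpa [val] using hv)
    · intro hv
      exact comp (ihk.1 (by simpa [val] using hv)) (Prv.taut (t_dni φ))
  | and φ ψ ihφ ihψ =>
    intro h1 k
    constructor
    · intro hv
      simp only [val, Bool.and_eq_true] at hv
      exact andintro ((ihφ (is1_and_left h1) k).1 hv.1) ((ihψ (is1_and_right h1) k).1 hv.2)
    · intro hv
      simp only [val, Bool.and_eq_false_iff] at hv
      rcases hv with hv | hv
      · exact comp ((ihφ (is1_and_left h1) k).2 hv) (Prv.taut (t_negand1 φ ψ))
      · exact comp ((ihψ (is1_and_right h1) k).2 hv) (Prv.taut (t_negand2 φ ψ))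
  | box φ ih =>
    intro h1 k
    constructor
    · intro hv
      have hAll : ∀ j, s j = true → val s φ j = true := by
        intro j hj
        have := of_decide_eq_true hv
        exact this j hj
      have hj : ∀ j : Fin 3, Prv Ax (imp (psi s) (imp (chi j 1) φ)) := by
        intro j
        by_cases hsj : s j = true
        · exact curry ((ih (is1_box h1) j).1 (hAll j hsj))
        · have hlit : Prv Ax (imp (psi s) (Fml.neg (dia (chi j 1)))) := by
            have h := psi_lit (Ax := Ax) s j
            rwa [lit, if_neg hsj] at h
          have hneg : Prv Ax (imp (psi s) (Fml.neg (chi j 1))) :=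
            comp (comp hlit (negdia_boxneg _)) (Prv.axT _)
          exact comp hneg (Prv.taut (t_exfalso _ φ))
      have hpsiφ : Prv Ax (imp (psi s) φ) := cover (hj 0) (hj 1) (hj 2)
      exact weaken (comp (psi_box s) (kmono hpsiφ))
    · intro hv
      have : ∃ j, s j = true ∧ val s φ j = false := by
        by_contra hc
        push_neg at hc
        have : val s (Fml.box φ) k = true := by
          apply decide_eq_true
          intro j hj
          rcases Bool.eq_false_or_eq_true (val s φ j) with h | h
          · exact h
          · exact absurd h (hc j hj)

        rw [hv] at this; exact Bool.false_ne_true this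
      obtain ⟨j, hsj, hvj⟩ := this
      have h1' : Prv Ax (imp (psi s) (imp (chi j 1) (Fml.neg φ))) :=
        curry ((ih (is1_box h1) j).2 hvj)
      have h3 : Prv Ax (imp (psi s) (imp (dia (chi j 1)) (dia (Fml.neg φ)))) :=
        comp (comp (psi_box s) (kmono h1')) (diaK _ _)
      have hdchi : Prv Ax (imp (psi s) (dia (chi j 1))) := by
        have h := psi_lit (Ax := Ax) s j
        rwa [lit, if_pos hsj] at h
      have h4 : Prv Ax (imp (psi s) (dia (Fml.neg φ))) := mp_in h3 hdchi
      have h5 : Prv Ax (imp (dia (Fml.neg φ)) (Fml.neg (Fml.box φ))) :=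
        contrap (kmono (Prv.taut (t_dni φ)))
      exact weaken (comp h4 h5)
end Aux4
section Aux5
open Fml

variable {W : Type} {V1 V2 : ℕ → Set W}

lemma sat_neg (w : W) (φ : Fml) : Sat V1 V2 w (Fml.neg φ) ↔ ¬ Sat V1 V2 w φ := Iff.rfl
lemma sat_and (w : W) (φ ψ : Fml) :
    Sat V1 V2 w (Fml.and φ ψ) ↔ Sat V1 V2 w φ ∧ Sat V1 V2 w ψ := Iff.rfl
lemma sat_box (w : W) (φ : Fml) :
    Sat V1 V2 w (Fml.box φ) ↔ ∀ v, Sat V1 V2 v φ := Iff.rfl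

lemma sat_imp (w : W) (A B : Fml) :
    Sat V1 V2 w (imp A B) ↔ (Sat V1 V2 w A → Sat V1 V2 w B) := by
  show ¬(Sat V1 V2 w A ∧ ¬ Sat V1 V2 w B) ↔ _
  tauto

lemma sat_dia (w : W) (A : Fml) :
    Sat V1 V2 w (dia A) ↔ ∃ v, Sat V1 V2 v A := by
  show ¬(∀ v, ¬ Sat V1 V2 v A) ↔ _
  push_neg
  rfl

open Classical in
lemma evalSat (w : W) :
    ∀ φ : Fml, evalProp (fun ψ => decide (Sat V1 V2 w ψ)) φ = decide (Sat V1 V2 w φ)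
  | Fml.tt _ => rfl
  | Fml.ff _ => rfl
  | Fml.box _ => rfl
  | Fml.neg φ => by
      rw [ev_neg, evalSat w φ]
      by_cases hp : Sat V1 V2 w φ <;> simp [hp, sat_neg]
  | Fml.and φ ψ => by
      rw [ev_and, evalSat w φ, evalSat w ψ]
      by_cases hp : Sat V1 V2 w φ <;> by_cases hq : Sat V1 V2 w ψ <;>
        simp [hp, hq, sat_and]

lemma satTaut (w : W) {θ : Fml} (t : Tautology θ) : Sat V1 V2 w θ := by
  classical
  have h := t (fun ψ => decide (Sat V1 V2 w ψ))
  rw [evalSat w θ] at h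
  exact of_decide_eq_true h

/-- Soundness of `S5[Con, Ground]` for models satisfying the two constraints. -/
lemma soundness {θ : Fml} (h : Prv (ConAx ∪ GroundAx) θ)
    (hc : ConC V1 V2) (hg : GroundC V1 V2) : ∀ w : W, Sat V1 V2 w θ := by
  induction h with
  | taut t => exact fun w => satTaut w t
  | axK A B =>
    intro w
    rw [sat_imp]
    intro h1
    rw [sat_imp]
    intro h2 v
    exact (sat_imp v A B).mp (h1 v) (h2 v)
  | axT A =>
    intro w
    rw [sat_imp]
    intro h1
    exact h1 w
  | ax5 A =>
    intro w
    rw [sat_imp]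
    intro h1 v
    rwa [sat_dia] at h1 ⊢
  | axm hm =>
    rcases hm with hm | hm
    · obtain ⟨x, rfl⟩ := hm
      intro w
      rw [sat_neg]
      rintro ⟨h1, h2⟩
      have := hc x
      have : w ∈ V1 x ∩ V2 x := ⟨h1, h2⟩
      rw [hc x] at this
      exact this
    · obtain ⟨x, rfl⟩ := hm
      intro w
      rw [sat_imp]
      rintro ⟨h1, h2⟩
      rw [sat_dia] at h1 h2 ⊢
      obtain ⟨v1, hv1⟩ := h1
      obtain ⟨v2, hv2⟩ := h2
      obtain ⟨u, hu⟩ := hg x ⟨v1, hv1⟩ ⟨v2, hv2⟩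
      rw [Set.mem_compl_iff, Set.mem_union] at hu
      push_neg at hu
      exact ⟨u, hu.1, hu.2⟩
  | mp _ _ ih1 ih2 => exact fun w => (sat_imp w _ _).mp (ih1 w) (ih2 w)
  | nec _ ih => exact fun _ v => ih v

end Aux5
section Aux6
open Fml

lemma t_id (A : Fml) : Tautology (imp A A) := by
  intro v; simp only [imp, ev_neg, ev_and]
  generalize evalProp v A = a; revert a; decide

lemma t_k (A X : Fml) : Tautology (imp A (imp X A)) := by
  intro v; simp only [imp, ev_neg, ev_and]
  generalize evalProp v A = a; generalize evalProp v X = x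
  revert a x; decide

lemma imp_of_thm {Ax : Set Fml} {C : Fml} (X : Fml) (h : Prv Ax C) : Prv Ax (imp X C) :=
  P1 (t_k C X) h

/-- The "state" formula fixing the truth values of both `T(x₁)` and `F(x₁)`. -/
def sg (bt bf : Bool) : Fml :=
  Fml.and (cond bt (tt 1) (Fml.neg (tt 1))) (cond bf (ff 1) (Fml.neg (ff 1)))

lemma ev_sg (v : Fml → Bool) (bt bf : Bool) :
    evalProp v (sg bt bf) = true ↔ (v (tt 1) = bt ∧ v (ff 1) = bf) := by
  cases bt <;> cases bf <;>
    simp [sg, ev_and, ev_neg, ev_tt, ev_ff]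

lemma ext_eval : ∀ φ : Fml, Extensional φ → Is1Formula φ →
    ∀ v w : Fml → Bool, v (tt 1) = w (tt 1) → v (ff 1) = w (ff 1) →
    evalProp v φ = evalProp w φ
  | Fml.tt x, _, h1, v, w, hv, _ => by
      obtain rfl := is1_var h1
      rw [ev_tt, ev_tt, hv]
  | Fml.ff x, _, h1, v, w, _, hf => by
      obtain rfl := is1_var' h1
      rw [ev_ff, ev_ff, hf]
  | Fml.neg φ, he, h1, v, w, hv, hf => by
      rw [ev_neg, ev_neg, ext_eval φ he (is1_neg h1) v w hv hf]
  | Fml.and φ ψ, he, h1, v, w, hv, hf => by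
      rw [ev_and, ev_and, ext_eval φ he.1 (is1_and_left h1) v w hv hf,
        ext_eval ψ he.2 (is1_and_right h1) v w hv hf]
  | Fml.box φ, he, _, _, _, _, _ => absurd he (by simp [Extensional])

/-- The intended model: worlds are the layers in `s`. -/
def MW (s : Fin 3 → Bool) : Type := {k : Fin 3 // s k = true}

def MV1 (s : Fin 3 → Bool) : ℕ → Set (MW s) :=
  fun x => if x = 1 then {w | w.1 = 0} else ∅

def MV2 (s : Fin 3 → Bool) : ℕ → Set (MW s) :=
  fun x => if x = 1 then {w | w.1 = 1} else ∅

lemma MV1_one (s : Fin 3 → Bool) : MV1 s 1 = {w | w.1 = 0} := if_pos rfl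
lemma MV2_one (s : Fin 3 → Bool) : MV2 s 1 = {w | w.1 = 1} := if_pos rfl
lemma MV1_ne (s : Fin 3 → Bool) {x : ℕ} (hx : x ≠ 1) : MV1 s x = ∅ := if_neg hx
lemma MV2_ne (s : Fin 3 → Bool) {x : ℕ} (hx : x ≠ 1) : MV2 s x = ∅ := if_neg hx

lemma MConC (s : Fin 3 → Bool) : ConC (MV1 s) (MV2 s) := by
  intro x
  by_cases hx : x = 1
  · subst hx
    rw [MV1_one, MV2_one]
    ext w
    simp only [Set.mem_inter_iff, Set.mem_setOf_eq, Set.mem_empty_iff_false, iff_false, not_and]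
    intro h0 h1
    rw [h0] at h1
    exact absurd h1 (by decide)
  · rw [MV1_ne s hx]
    simp

lemma MGroundC (s : Fin 3 → Bool) (hg : s 0 = true → s 1 = true → s 2 = true) :
    GroundC (MV1 s) (MV2 s) := by
  intro x h1 h2
  by_cases hx : x = 1
  · subst hx
    rw [MV1_one] at h1
    rw [MV2_one] at h2
    obtain ⟨w0, hw0⟩ := h1
    obtain ⟨w1, hw1⟩ := h2
    have hw0' : w0.1 = 0 := hw0
    have hw1' : w1.1 = 1 := hw1
    have hs0 : s 0 = true := by rw [← hw0']; exact w0.2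
    have hs1 : s 1 = true := by rw [← hw1']; exact w1.2
    refine ⟨⟨2, hg hs0 hs1⟩, ?_⟩
    intro hmem
    replace hmem := (Set.mem_union _ _ _).mp hmem
    rcases hmem with h | h
    · exact absurd (show (2 : Fin 3) = 0 from h) (by decide)
    · exact absurd (show (2 : Fin 3) = 1 from h) (by decide)
  · exfalso
    rw [MV1_ne s hx] at h1
    exact Set.not_nonempty_empty h1

lemma Msat_chi (s : Fin 3 → Bool) (w : MW s) (k : Fin 3) :
    Sat (MV1 s) (MV2 s) w (chi k 1) ↔ w.1 = k := by
  have fact : ∀ j : Fin 3, (¬j = 0 ∧ ¬j = 1) ↔ j = 2 := by decide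
  fin_cases k
  · show w ∈ MV1 s 1 ↔ _
    simp [MV1]
  · show w ∈ MV2 s 1 ↔ _
    simp [MV2]
  · show ((¬ w ∈ MV1 s 1) ∧ (¬ w ∈ MV2 s 1)) ↔ _
    simp only [MV1, MV2, if_pos rfl, Set.mem_setOf_eq]
    exact fact w.1

lemma Msat_psi (s : Fin 3 → Bool) (w : MW s) : Sat (MV1 s) (MV2 s) w (psi s) := by
  have hlit : ∀ k : Fin 3, Sat (MV1 s) (MV2 s) w (lit s k) := by
    intro k
    by_cases hk : s k = true
    · rw [lit, if_pos hk]
      exact (sat_dia w _).mpr ⟨⟨k, hk⟩, (Msat_chi s _ k).mpr rfl⟩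
    · rw [lit, if_neg hk]
      rw [sat_neg]
      intro hd
      obtain ⟨v, hv⟩ := (sat_dia w _).mp hd
      have := (Msat_chi s v k).mp hv
      exact hk (this ▸ v.2)
  exact ⟨hlit 0, hlit 1, hlit 2⟩

lemma Msat_sg (s : Fin 3 → Bool) (e : Fin 3) (he : s e = true) :
    Sat (MV1 s) (MV2 s) ⟨e, he⟩ (sg (decide (e = 0)) (decide (e = 1))) := by
  constructor
  · show Sat (MV1 s) (MV2 s) ⟨e, he⟩ (cond (decide (e = 0)) (tt 1) (Fml.neg (tt 1)))
    by_cases h : e = 0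
    · rw [decide_eq_true h]
      show (⟨e, he⟩ : MW s) ∈ MV1 s 1
      rw [MV1_one]
      exact h
    · rw [decide_eq_false h]
      show ¬ (⟨e, he⟩ : MW s) ∈ MV1 s 1
      rw [MV1_one]
      exact h
  · show Sat (MV1 s) (MV2 s) ⟨e, he⟩ (cond (decide (e = 1)) (ff 1) (Fml.neg (ff 1)))
    by_cases h : e = 1
    · rw [decide_eq_true h]
      show (⟨e, he⟩ : MW s) ∈ MV2 s 1
      rw [MV2_one]
      exact h
    · rw [decide_eq_false h]
      show ¬ (⟨e, he⟩ : MW s) ∈ MV2 s 1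
      rw [MV2_one]
      exact h

end Aux6
section Aux7
open Fml

lemma is1_tt1 : IsNFormula 1 (tt 1) := by
  intro y hy
  have hy1 : y = 1 := hy
  subst hy1
  exact ⟨le_refl 1, le_refl 1⟩

lemma is1_ff1 : IsNFormula 1 (ff 1) := by
  intro y hy
  have hy1 : y = 1 := hy
  subst hy1
  exact ⟨le_refl 1, le_refl 1⟩

lemma is1_chi (k : Fin 3) : IsNFormula 1 (chi k 1) := by
  fin_cases k
  · exact is1_tt1
  · exact is1_ff1
  · intro y hy
    rcases hy with hy | hy
    · exact is1_tt1 hy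
    · exact is1_ff1 hy

lemma is1_dia_chi (k : Fin 3) : IsNFormula 1 (dia (chi k 1)) := is1_chi k

lemma t_sg_chi (e : Fin 3) :
    Tautology (imp (sg (decide (e = 0)) (decide (e = 1))) (chi e 1)) := by
  fin_cases e
  · exact t_proj1 (tt 1) (Fml.neg (ff 1))
  · exact t_proj2 (Fml.neg (tt 1)) (ff 1)
  · exact t_id (Nf 1)
end Aux7
/-- every 1-isolator for S5[Con,Ground] is satisfied at some
world of some model whose variable assignment satisfies the Con and Ground
constraints. -/
theorem isolator_satisfiable (φ : Fml) (h : Isolator 1 (ConAx ∪ GroundAx) φ) :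
    ∃ (W : Type) (V1 V2 : ℕ → Set W) (w : W),
      ConC V1 V2 ∧ GroundC V1 V2 ∧ Sat V1 V2 w φ := by
  classical
  obtain ⟨ε, ι, hε, hι, hφeq, hcons⟩ := h
  obtain ⟨hεcons, hεmem, hεmax⟩ := hε
  obtain ⟨hιcons, hιmem, hιmax⟩ := hι
  have hεext := hεmem.1
  have hε1 := hεmem.2
  have hιint := hιmem.1
  have hι1 := hιmem.2
  -- Step A: the extensional isolator decides the layer of the actual world
  have hstateE : ∃ e : Fin 3,
      Prv (ConAx ∪ GroundAx) (imp ε (sg (decide (e = 0)) (decide (e = 1)))) := by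
    rcases hεmax (tt 1) ⟨trivial, is1_tt1⟩ with hT | hT <;>
      rcases hεmax (ff 1) ⟨trivial, is1_ff1⟩ with hF | hF
    · exfalso
      have hcc : Prv (ConAx ∪ GroundAx) (Fml.neg (Fml.and (tt 1) (ff 1))) :=
        Prv.axm (Or.inl ⟨1, rfl⟩)
      have hb : Prv (ConAx ∪ GroundAx) (imp ε Fml.bot) :=
        imp_bot (andintro hT hF) (imp_of_thm ε hcc)
      exact absurd hεcons (not_consistent_of_imp_bot hb)
    · exact ⟨0, andintro hT hF⟩
    · exact ⟨1, andintro hT hF⟩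
    · exact ⟨2, andintro hT hF⟩
  obtain ⟨e, hsg⟩ := hstateE
  -- the state formula propositionally settles ε
  have hεtaut : Tautology (imp (sg (decide (e = 0)) (decide (e = 1))) ε) := by
    set bt := decide (e = 0) with hbt
    set bf := decide (e = 1) with hbf
    set v₀ : Fml → Bool :=
      fun ψ => if ψ = tt 1 then bt else if ψ = ff 1 then bf else false with hv₀
    have hv₀t : v₀ (tt 1) = bt := by
      show (if (tt 1 : Fml) = tt 1 then bt else if (tt 1 : Fml) = ff 1 then bf else false) = bt
      rw [if_pos rfl]
    have hv₀f : v₀ (ff 1) = bf := by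
      have h1 : (ff 1 : Fml) ≠ tt 1 := by intro hcc; cases hcc
      show (if (ff 1 : Fml) = tt 1 then bt else if (ff 1 : Fml) = ff 1 then bf else false) = bf
      rw [if_neg h1, if_pos rfl]
    by_cases hv : evalProp v₀ ε = true
    · intro v
      show (!(evalProp v (sg bt bf) && !(evalProp v ε))) = true
      by_cases hσ : evalProp v (sg bt bf) = true
      · obtain ⟨ht, hf⟩ := (ev_sg v bt bf).mp hσ
        have heq := ext_eval ε hεext hε1 v v₀ (by rw [ht, hv₀t]) (by rw [hf, hv₀f])
        rw [hσ, heq, hv]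
        rfl
      · rw [Bool.eq_false_iff.mpr hσ]
        rfl
    · exfalso
      have hvf : evalProp v₀ ε = false := Bool.eq_false_iff.mpr hv
      have htn : Tautology (imp (sg bt bf) (Fml.neg ε)) := by
        intro v
        show (!(evalProp v (sg bt bf) && !(!(evalProp v ε)))) = true
        by_cases hσ : evalProp v (sg bt bf) = true
        · obtain ⟨ht, hf⟩ := (ev_sg v bt bf).mp hσ
          have heq := ext_eval ε hεext hε1 v v₀ (by rw [ht, hv₀t]) (by rw [hf, hv₀f])
          rw [hσ, heq, hvf]
          rfl
        · rw [Bool.eq_false_iff.mpr hσ]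
          rfl
      have h1 : Prv (ConAx ∪ GroundAx) (imp ε (Fml.neg ε)) := comp hsg (Prv.taut htn)
      exact absurd hεcons
        (not_consistent_of_imp_bot (imp_bot (Prv.taut (t_id ε)) h1))
  -- Step B: the intensional isolator decides the layer set s
  set s : Fin 3 → Bool :=
    fun k => decide (Prv (ConAx ∪ GroundAx) (imp ι (dia (chi k 1)))) with hsdef
  have hs : ∀ k, Prv (ConAx ∪ GroundAx) (imp ι (lit s k)) := by
    intro k
    by_cases hk : Prv (ConAx ∪ GroundAx) (imp ι (dia (chi k 1)))
    · have hsk : s k = true := by rw [hsdef]; exact decide_eq_true hk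
      rw [lit, if_pos hsk]
      exact hk
    · have hsk : s k = false := by rw [hsdef]; exact decide_eq_false hk
      rw [lit, if_neg (by rw [hsk]; exact Bool.false_ne_true)]
      rcases hιmax (dia (chi k 1)) ⟨trivial, is1_dia_chi k⟩ with h' | h'
      · exact absurd h' hk
      · exact h'
  have hpsi : Prv (ConAx ∪ GroundAx) (imp ι (psi s)) :=
    andintro (hs 0) (andintro (hs 1) (hs 2))
  -- Step C: Ground forces the layer set to be closed
  have hgs : s 0 = true → s 1 = true → s 2 = true := by
    intro h0 h1
    by_contra h2
    have d0 := hs 0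
    rw [lit, if_pos h0] at d0
    have d1 := hs 1
    rw [lit, if_pos h1] at d1
    have g : Prv (ConAx ∪ GroundAx)
        (imp (Fml.and (dia (tt 1)) (dia (ff 1))) (dia (Nf 1))) :=
      Prv.axm (Or.inr ⟨1, rfl⟩)
    have dn : Prv (ConAx ∪ GroundAx) (imp ι (dia (Nf 1))) :=
      comp (andintro d0 d1) g
    have n2 := hs 2
    rw [lit, if_neg h2] at n2
    have hb : Prv (ConAx ∪ GroundAx) (imp ι Fml.bot) :=
      imp_bot dn (show Prv (ConAx ∪ GroundAx) (imp ι (Fml.neg (dia (Nf 1)))) from n2)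
    exact absurd hιcons (not_consistent_of_imp_bot hb)
  -- the actual layer belongs to the layer set
  have hse : s e = true := by
    by_contra hse
    have n := hs e
    rw [lit, if_neg hse] at n
    have hnc : Prv (ConAx ∪ GroundAx) (imp ι (Fml.neg (chi e 1))) :=
      comp (comp n (negdia_boxneg _)) (Prv.axT _)
    have hc : Prv (ConAx ∪ GroundAx) (imp ε (chi e 1)) :=
      comp hsg (Prv.taut (t_sg_chi e))
    have hb : Prv (ConAx ∪ GroundAx) (imp (Fml.and ε ι) Fml.bot) :=
      imp_bot (comp (Prv.taut (t_proj1 ε ι)) hc) (comp (Prv.taut (t_proj2 ε ι)) hnc)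
    rw [hφeq] at hcons
    exact absurd hcons (not_consistent_of_imp_bot hb)
  -- Step D: ψ_s decides ι, and ι is consistent, so ψ_s proves ι
  have hkey := key (Ax := ConAx ∪ GroundAx) Set.subset_union_left s
  by_cases hb : val s ι e = true
  · have hall : ∀ k, val s ι k = true := fun k => (val_int hιint k e).trans hb
    have hcov : Prv (ConAx ∪ GroundAx) (imp (psi s) ι) :=
      cover (curry ((hkey ι hι1 0).1 (hall 0))) (curry ((hkey ι hι1 1).1 (hall 1)))
        (curry ((hkey ι hι1 2).1 (hall 2)))
    refine ⟨MW s, MV1 s, MV2 s, ⟨e, hse⟩, MConC s, MGroundC s hgs, ?_⟩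
    rw [hφeq]
    refine ⟨?_, ?_⟩
    · exact (sat_imp _ _ _).mp (satTaut _ hεtaut) (Msat_sg s e hse)
    · exact (sat_imp _ _ _).mp (soundness hcov (MConC s) (MGroundC s hgs) _)
        (Msat_psi s _)
  · exfalso
    have hbf : val s ι e = false := Bool.eq_false_iff.mpr hb
    have hall : ∀ k, val s ι k = false := fun k => (val_int hιint k e).trans hbf
    have hncov : Prv (ConAx ∪ GroundAx) (imp (psi s) (Fml.neg ι)) :=
      cover (curry ((hkey ι hι1 0).2 (hall 0))) (curry ((hkey ι hι1 1).2 (hall 1)))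
        (curry ((hkey ι hι1 2).2 (hall 2)))
    have hbot : Prv (ConAx ∪ GroundAx) (imp ι Fml.bot) :=
      imp_bot (Prv.taut (t_id ι)) (comp hpsi hncov)
    exact absurd hιcons (not_consistent_of_imp_bot hbot)

end KripkeModal
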